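/- arXiv:2512.18233 — 2 statements merged into one kernel-verified Lean document; each statement's English description precedes it below -/
import Mathlib

section
/- (Second derivative test) Let a < b be real numbers and let F : [a, b] → ℝ be a twice differentiable function such that |F″(x)| ≥ m > 0 for all x ∈ [a, b]. Then |∫_{a}^{b} e^{iF(x)} dx| ≤ 8/√m. -/
open Filter Finset
open MeasureTheory intervalIntegral Set Complex

lemma my_integral_conj (f : ℝ → ℂ) (a b : ℝ) :
    ∫ x in a..b, (starRingEnd ℂ) (f x) = (starRingEnd ℂ) (∫ x in a..b, f x) := by
  simp [intervalIntegral, ← integral_conj, map_sub]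

lemma monoAux (a b : ℝ) (G G' : ℝ → ℝ)
    (hG : ∀ x ∈ Set.Icc a b, HasDerivWithinAt G (G' x) (Set.Icc a b) x)
    (h0 : ∀ x ∈ Set.Icc a b, 0 ≤ G' x) : MonotoneOn G (Set.Icc a b) := by
  apply monotoneOn_of_deriv_nonneg (convex_Icc a b)
    (fun x hx => (hG x hx).continuousWithinAt)
  · intro x hx
    rw [interior_Icc] at hx
    exact ((hG x (Set.Ioo_subset_Icc_self hx)).hasDerivAt
      (Icc_mem_nhds hx.1 hx.2)).differentiableAt.differentiableWithinAt
  · intro x hx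
    rw [interior_Icc] at hx
    rw [((hG x (Set.Ioo_subset_Icc_self hx)).hasDerivAt (Icc_mem_nhds hx.1 hx.2)).deriv]
    exact h0 x (Set.Ioo_subset_Icc_self hx)

lemma trivBound (a b : ℝ) (hab : a ≤ b) (F : ℝ → ℝ) :
    ‖∫ x in a..b, Complex.exp (Complex.I * (F x : ℂ))‖ ≤ b - a := by
  have h := intervalIntegral.norm_integral_le_of_norm_le_const (C := 1) (a := a) (b := b)
    (f := fun x => Complex.exp (Complex.I * (F x : ℂ))) (fun x _ => by
      simp [Complex.norm_exp])
  rw [one_mul, _root_.abs_of_nonneg (sub_nonneg.2 hab)] at h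
  exact h

lemma vdc_first (a b lam : ℝ) (hab : a ≤ b) (F F' F'' : ℝ → ℝ)
    (hF' : ∀ x ∈ Set.Icc a b, HasDerivWithinAt F (F' x) (Set.Icc a b) x)
    (hF'' : ∀ x ∈ Set.Icc a b, HasDerivWithinAt F' (F'' x) (Set.Icc a b) x)
    (hlam : 0 < lam) (hge : ∀ x ∈ Set.Icc a b, lam ≤ |F' x|)
    (h0 : ∀ x ∈ Set.Icc a b, 0 ≤ F'' x) :
    ‖∫ x in a..b, Complex.exp (Complex.I * (F x : ℂ))‖ ≤ 3 / lam := by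
  have haI : a ∈ Set.Icc a b := Set.left_mem_Icc.2 hab
  have hbI : b ∈ Set.Icc a b := Set.right_mem_Icc.2 hab
  have hne : ∀ x ∈ Set.Icc a b, F' x ≠ 0 := by
    intro x hx h
    have := hge x hx
    rw [h, abs_zero] at this
    linarith
  have contF : ContinuousOn F (Set.Icc a b) := fun x hx => (hF' x hx).continuousWithinAt
  have contF' : ContinuousOn F' (Set.Icc a b) := fun x hx => (hF'' x hx).continuousWithinAt
  have hFat : ∀ x ∈ Set.Ioo a b, HasDerivAt F (F' x) x := fun x hx =>
    (hF' x (Set.Ioo_subset_Icc_self hx)).hasDerivAt (Icc_mem_nhds hx.1 hx.2)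
  have hF'at : ∀ x ∈ Set.Ioo a b, HasDerivAt F' (F'' x) x := fun x hx =>
    (hF'' x (Set.Ioo_subset_Icc_self hx)).hasDerivAt (Icc_mem_nhds hx.1 hx.2)
  have habs : ∀ x : ℝ, ‖Complex.exp (Complex.I * (F x : ℂ))‖ = 1 := by
    intro x
    rw [Complex.norm_exp]
    have h1 : (Complex.I * (F x : ℂ)).re = 0 := by simp
    rw [h1, Real.exp_zero]
  -- derivative of G
  have hGd : ∀ x ∈ Set.Ioo a b, HasDerivAt
      (fun y => Complex.exp (Complex.I * (F y : ℂ)) * (-Complex.I) * (((F' y)⁻¹ : ℝ) : ℂ))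
      (Complex.exp (Complex.I * (F x : ℂ))
        + Complex.exp (Complex.I * (F x : ℂ)) * (Complex.I * ((F'' x / (F' x) ^ 2 : ℝ) : ℂ))) x := by
    intro x hx
    have hx' := Set.Ioo_subset_Icc_self hx
    have hne' : F' x ≠ 0 := hne x hx'
    have hFc : HasDerivAt (fun y => ((F y : ℂ))) (F' x) x := (hFat x hx).ofReal_comp
    have h1 : HasDerivAt (fun y => Complex.I * (F y : ℂ)) (Complex.I * (F' x : ℂ)) x :=
      hFc.const_mul _
    have h2 : HasDerivAt (fun y => Complex.exp (Complex.I * (F y : ℂ)))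
        (Complex.exp (Complex.I * (F x : ℂ)) * (Complex.I * (F' x : ℂ))) x := h1.cexp
    have hu : HasDerivAt (fun y => Complex.exp (Complex.I * (F y : ℂ)) * (-Complex.I))
        (Complex.exp (Complex.I * (F x : ℂ)) * (Complex.I * (F' x : ℂ)) * (-Complex.I)) x :=
      h2.mul_const _
    have hrd : HasDerivAt (fun y => (F' y)⁻¹) (-(F'' x) / (F' x) ^ 2) x :=
      (hF'at x hx).inv hne'
    have hv : HasDerivAt (fun y => (((F' y)⁻¹ : ℝ) : ℂ)) ((-(F'' x) / (F' x) ^ 2 : ℝ) : ℂ) x :=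
      hrd.ofReal_comp
    have h5 := hu.mul hv
    refine h5.congr_deriv ?_
    symm
    have hI2 : (Complex.I) ^ 2 = -1 := Complex.I_sq
    have hcne : ((F' x : ℂ)) ≠ 0 := Complex.ofReal_ne_zero.2 hne'
    push_cast
    field_simp
    ring_nf
    rw [hI2]
    ring
  -- continuity of G
  have contG : ContinuousOn
      (fun y => Complex.exp (Complex.I * (F y : ℂ)) * (-Complex.I) * (((F' y)⁻¹ : ℝ) : ℂ))
      (Set.Icc a b) := by
    apply ContinuousOn.mul
    · exact ((continuousOn_const.mul
        (Complex.continuous_ofReal.comp_continuousOn contF)).cexp).mul continuousOn_const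
    · exact Complex.continuous_ofReal.comp_continuousOn (contF'.inv₀ hne)
  -- integrability of w := F''/F'^2, the nonneg derivative of -1/F'
  have hHd : ∀ x ∈ Set.Ioo a b, HasDerivAt (fun y => -(F' y)⁻¹) (F'' x / (F' x) ^ 2) x := by
    intro x hx
    have h := ((hF'at x hx).inv (hne x (Set.Ioo_subset_Icc_self hx))).neg
    exact h.congr_deriv (by ring)
  have contH : ContinuousOn (fun y => -(F' y)⁻¹) (Set.Icc a b) := (contF'.inv₀ hne).neg
  have hwint : IntervalIntegrable (fun x => F'' x / (F' x) ^ 2) volume a b := by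
    apply intervalIntegrable_deriv_of_nonneg
    · rwa [Set.uIcc_of_le hab]
    · rw [min_eq_left hab, max_eq_right hab]; exact hHd
    · rw [min_eq_left hab, max_eq_right hab]
      intro x hx
      exact div_nonneg (h0 x (Set.Ioo_subset_Icc_self hx)) (sq_nonneg _)
  -- FTC for w
  have hwFTC : ∫ x in a..b, F'' x / (F' x) ^ 2 = (F' a)⁻¹ - (F' b)⁻¹ := by
    rw [integral_eq_sub_of_hasDerivAt_of_le hab contH hHd hwint]
    ring
  -- integrability of the complex pieces
  have heint : IntervalIntegrable (fun x => Complex.exp (Complex.I * (F x : ℂ))) volume a b := by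
    apply ContinuousOn.intervalIntegrable
    rw [Set.uIcc_of_le hab]
    exact (continuousOn_const.mul (Complex.continuous_ofReal.comp_continuousOn contF)).cexp
  have hewint : IntervalIntegrable
      (fun x => Complex.exp (Complex.I * (F x : ℂ)) * (Complex.I * ((F'' x / (F' x) ^ 2 : ℝ) : ℂ)))
      volume a b := by
    rw [intervalIntegrable_iff_integrableOn_Icc_of_le hab]
    have hbd : IntegrableOn (fun x => ((F'' x / (F' x) ^ 2 : ℝ) : ℂ)) (Set.Icc a b) :=
      ((intervalIntegrable_iff_integrableOn_Icc_of_le hab).1 hwint).ofReal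
    have hmeas : AEStronglyMeasurable (fun x => Complex.exp (Complex.I * (F x : ℂ)) * Complex.I)
        (volume.restrict (Set.Icc a b)) :=
      ((((continuousOn_const.mul
        (Complex.continuous_ofReal.comp_continuousOn contF)).cexp).mul
        continuousOn_const)).aestronglyMeasurable measurableSet_Icc
    have hC : ∃ C, ∀ x, ‖Complex.exp (Complex.I * (F x : ℂ)) * Complex.I‖ ≤ C := by
      refine ⟨1, fun x => ?_⟩
      rw [norm_mul, habs, one_mul]
      simp
    have := MeasureTheory.Integrable.bdd_mul hbd hmeas (Filter.Eventually.of_forall hC.choose_spec)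
    exact this.congr (Filter.Eventually.of_forall fun x => by ring)
  have hsum : IntervalIntegrable (fun x => Complex.exp (Complex.I * (F x : ℂ))
      + Complex.exp (Complex.I * (F x : ℂ)) * (Complex.I * ((F'' x / (F' x) ^ 2 : ℝ) : ℂ)))
      volume a b := heint.add hewint
  -- FTC for G
  have hGFTC := integral_eq_sub_of_hasDerivAt_of_le hab contG hGd hsum
  have hsplit : ∫ x in a..b, Complex.exp (Complex.I * (F x : ℂ))
      = (Complex.exp (Complex.I * (F b : ℂ)) * (-Complex.I) * (((F' b)⁻¹ : ℝ) : ℂ)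
        - Complex.exp (Complex.I * (F a : ℂ)) * (-Complex.I) * (((F' a)⁻¹ : ℝ) : ℂ))
        - ∫ x in a..b, Complex.exp (Complex.I * (F x : ℂ))
            * (Complex.I * ((F'' x / (F' x) ^ 2 : ℝ) : ℂ)) := by
    rw [← hGFTC, intervalIntegral.integral_add heint hewint]
    ring
  -- boundary bound
  have hGb : ∀ x ∈ Set.Icc a b,
      ‖Complex.exp (Complex.I * (F x : ℂ)) * (-Complex.I) * (((F' x)⁻¹ : ℝ) : ℂ)‖ ≤ 1 / lam := by
    intro x hx
    rw [norm_mul, norm_mul, habs, one_mul]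
    have h2 : ‖(-Complex.I)‖ = 1 := by simp
    rw [h2, one_mul, Complex.norm_real, Real.norm_eq_abs, abs_inv, one_div]
    exact inv_anti₀ hlam (hge x hx)
  -- oscillation integral bound
  have hInt2 : ‖∫ x in a..b, Complex.exp (Complex.I * (F x : ℂ))
      * (Complex.I * ((F'' x / (F' x) ^ 2 : ℝ) : ℂ))‖ ≤ 1 / lam := by
    have hb1 : ‖∫ x in a..b, Complex.exp (Complex.I * (F x : ℂ))
        * (Complex.I * ((F'' x / (F' x) ^ 2 : ℝ) : ℂ))‖
        ≤ |∫ x in a..b, F'' x / (F' x) ^ 2| := by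
      apply intervalIntegral.norm_integral_le_abs_of_norm_le ?_ hwint
      refine (MeasureTheory.ae_restrict_mem measurableSet_uIoc).mono fun x hx => ?_
      rw [Set.uIoc_of_le hab] at hx
      rw [norm_mul, habs, one_mul, norm_mul]
      have h2 : ‖Complex.I‖ = 1 := by simp
      rw [h2, one_mul, Complex.norm_real, Real.norm_eq_abs,
        _root_.abs_of_nonneg (div_nonneg (h0 x (Set.Ioc_subset_Icc_self hx)) (sq_nonneg _))]
    rw [hwFTC] at hb1
    refine hb1.trans ?_
    rw [abs_le, one_div]
    have monoF' : MonotoneOn F' (Set.Icc a b) := monoAux a b F' F'' hF'' h0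
    rcases lt_or_gt_of_ne (hne a haI) with hnega | hposa
    · have hnegb : F' b < 0 := by
        rcases lt_or_gt_of_ne (hne b hbI) with h | h
        · exact h
        · exfalso
          have h02 : (0 : ℝ) ∈ Set.Icc (F' a) (F' b) := ⟨hnega.le, h.le⟩
          obtain ⟨c, hc, hc0⟩ := intermediate_value_Icc hab contF' h02
          exact hne c hc hc0
      have hble : lam ≤ -F' b := by
        have := hge b hbI
        rwa [abs_of_neg hnegb] at this
      have hale : lam ≤ -F' a := by
        have := hge a haI
        rwa [abs_of_neg hnega] at this
      have h1 : (F' b)⁻¹ < 0 := inv_neg''.2 hnegb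
      have h2 : (-F' b)⁻¹ ≤ lam⁻¹ := inv_anti₀ hlam hble
      have h3 : (-F' a)⁻¹ ≤ lam⁻¹ := inv_anti₀ hlam hale
      rw [inv_neg] at h2 h3
      have h4 : (F' a)⁻¹ < 0 := inv_neg''.2 hnega
      constructor <;> linarith
    · have hale : lam ≤ F' a := by
        have := hge a haI
        rwa [abs_of_pos hposa] at this
      have hbge : lam ≤ F' b := hale.trans (monoF' haI hbI hab)
      have h1 : (F' a)⁻¹ ≤ lam⁻¹ := inv_anti₀ hlam hale
      have h2 : 0 < (F' b)⁻¹ := inv_pos.2 (lt_of_lt_of_le hlam hbge)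
      have h3 : (F' b)⁻¹ ≤ lam⁻¹ := inv_anti₀ hlam hbge
      have h4 : 0 < (F' a)⁻¹ := inv_pos.2 (lt_of_lt_of_le hlam hale)
      constructor <;> linarith
  calc ‖∫ x in a..b, Complex.exp (Complex.I * (F x : ℂ))‖
      ≤ ‖Complex.exp (Complex.I * (F b : ℂ)) * (-Complex.I) * (((F' b)⁻¹ : ℝ) : ℂ)
          - Complex.exp (Complex.I * (F a : ℂ)) * (-Complex.I) * (((F' a)⁻¹ : ℝ) : ℂ)‖
        + ‖∫ x in a..b, Complex.exp (Complex.I * (F x : ℂ))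
            * (Complex.I * ((F'' x / (F' x) ^ 2 : ℝ) : ℂ))‖ := by
        rw [hsplit]; exact norm_sub_le _ _
    _ ≤ (1 / lam + 1 / lam) + 1 / lam := by
        gcongr
        exact (norm_sub_le _ _).trans (add_le_add (hGb b hbI) (hGb a haI))
    _ = 3 / lam := by ring

lemma growthAux (a b m : ℝ) (F' F'' : ℝ → ℝ)
    (hF'' : ∀ x ∈ Set.Icc a b, HasDerivWithinAt F' (F'' x) (Set.Icc a b) x)
    (hbd : ∀ x ∈ Set.Icc a b, m ≤ F'' x) :
    ∀ x ∈ Set.Icc a b, ∀ y ∈ Set.Icc a b, x ≤ y → m * (y - x) ≤ F' y - F' x := by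
  have h := monoAux a b (fun t => F' t - m * t) (fun t => F'' t - m)
    (fun x hx => ((hF'' x hx).sub ((hasDerivWithinAt_id x _).const_mul m)).congr_deriv (by ring))
    (fun x hx => sub_nonneg.2 (hbd x hx))
  intro x hx y hy hxy
  have h2 := h hx hy hxy
  simp only at h2
  linarith

lemma vdc_half (a b m : ℝ) (hab : a ≤ b) (F F' F'' : ℝ → ℝ)
    (hF' : ∀ x ∈ Set.Icc a b, HasDerivWithinAt F (F' x) (Set.Icc a b) x)
    (hF'' : ∀ x ∈ Set.Icc a b, HasDerivWithinAt F' (F'' x) (Set.Icc a b) x)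
    (hm : 0 < m) (hbd : ∀ x ∈ Set.Icc a b, m ≤ F'' x)
    (ha : -Real.sqrt m ≤ F' a) :
    ‖∫ x in a..b, Complex.exp (Complex.I * (F x : ℂ))‖ ≤ 5 / Real.sqrt m := by
  have hL : 0 < Real.sqrt m := Real.sqrt_pos.2 hm
  have hL2 : Real.sqrt m * Real.sqrt m = m := Real.mul_self_sqrt hm.le
  have h0 : ∀ x ∈ Set.Icc a b, 0 ≤ F'' x := fun x hx => hm.le.trans (hbd x hx)
  have monoF' := monoAux a b F' F'' hF'' h0
  have grow := growthAux a b m F' F'' hF'' hbd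
  have contF : ContinuousOn F (Set.Icc a b) := fun x hx => (hF' x hx).continuousWithinAt
  have contF' : ContinuousOn F' (Set.Icc a b) := fun x hx => (hF'' x hx).continuousWithinAt
  have haI : a ∈ Set.Icc a b := Set.left_mem_Icc.2 hab
  have hbI : b ∈ Set.Icc a b := Set.right_mem_Icc.2 hab
  by_cases hb1 : F' b ≤ Real.sqrt m
  · have h1 : m * (b - a) ≤ F' b - F' a := grow a haI b hbI hab
    have h2 : b - a ≤ 2 / Real.sqrt m := by
      rw [le_div_iff₀ hL]
      nlinarith
    refine (trivBound a b hab F).trans (h2.trans ?_)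
    gcongr <;> norm_num
  · push_neg at hb1
    by_cases ha1 : Real.sqrt m ≤ F' a
    · have h3 := vdc_first a b (Real.sqrt m) hab F F' F'' hF' hF'' hL
        (fun x hx => by
          rw [abs_of_pos (lt_of_lt_of_le hL (ha1.trans (monoF' haI hx hx.1)))]
          exact ha1.trans (monoF' haI hx hx.1)) h0
      refine h3.trans ?_
      gcongr <;> norm_num
    · push_neg at ha1
      obtain ⟨c, hc, hFc⟩ := intermediate_value_Icc hab contF' ⟨ha1.le, hb1.le⟩
      have hac : a ≤ c := hc.1
      have hcb : c ≤ b := hc.2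
      have hsub1 : Set.Icc a c ⊆ Set.Icc a b := Set.Icc_subset_Icc le_rfl hcb
      have hsub2 : Set.Icc c b ⊆ Set.Icc a b := Set.Icc_subset_Icc hac le_rfl
      have contE : ContinuousOn (fun x => Complex.exp (Complex.I * (F x : ℂ))) (Set.Icc a b) :=
        (continuousOn_const.mul (Complex.continuous_ofReal.comp_continuousOn contF)).cexp
      have hint1 : IntervalIntegrable (fun x => Complex.exp (Complex.I * (F x : ℂ))) volume a c :=
        ContinuousOn.intervalIntegrable (by rw [Set.uIcc_of_le hac]; exact contE.mono hsub1)
      have hint2 : IntervalIntegrable (fun x => Complex.exp (Complex.I * (F x : ℂ))) volume c b :=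
        ContinuousOn.intervalIntegrable (by rw [Set.uIcc_of_le hcb]; exact contE.mono hsub2)
      rw [← intervalIntegral.integral_add_adjacent_intervals hint1 hint2]
      have hp1 : ‖∫ x in a..c, Complex.exp (Complex.I * (F x : ℂ))‖
          ≤ 2 / Real.sqrt m := by
        refine (trivBound a c hac F).trans ?_
        have h1 : m * (c - a) ≤ F' c - F' a := grow a haI c hc hac
        rw [le_div_iff₀ hL]
        nlinarith
      have hp2 : ‖∫ x in c..b, Complex.exp (Complex.I * (F x : ℂ))‖
          ≤ 3 / Real.sqrt m := by
        apply vdc_first c b (Real.sqrt m) hcb F F' F''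
          (fun x hx => (hF' x (hsub2 hx)).mono hsub2)
          (fun x hx => (hF'' x (hsub2 hx)).mono hsub2) hL
          (fun x hx => ?_) (fun x hx => h0 x (hsub2 hx))
        have hge : Real.sqrt m ≤ F' x := by
          rw [← hFc]
          exact monoF' hc (hsub2 hx) hx.1
        rw [abs_of_pos (lt_of_lt_of_le hL hge)]
        exact hge
      refine (norm_add_le _ _).trans ?_
      calc ‖∫ x in a..c, Complex.exp (Complex.I * (F x : ℂ))‖
            + ‖∫ x in c..b, Complex.exp (Complex.I * (F x : ℂ))‖
          ≤ 2 / Real.sqrt m + 3 / Real.sqrt m := add_le_add hp1 hp2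
        _ = 5 / Real.sqrt m := by ring

lemma vdc_pos (a b m : ℝ) (hab : a ≤ b) (F F' F'' : ℝ → ℝ)
    (hF' : ∀ x ∈ Set.Icc a b, HasDerivWithinAt F (F' x) (Set.Icc a b) x)
    (hF'' : ∀ x ∈ Set.Icc a b, HasDerivWithinAt F' (F'' x) (Set.Icc a b) x)
    (hm : 0 < m) (hbd : ∀ x ∈ Set.Icc a b, m ≤ F'' x) :
    ‖∫ x in a..b, Complex.exp (Complex.I * (F x : ℂ))‖ ≤ 8 / Real.sqrt m := by
  have hL : 0 < Real.sqrt m := Real.sqrt_pos.2 hm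
  have h0 : ∀ x ∈ Set.Icc a b, 0 ≤ F'' x := fun x hx => hm.le.trans (hbd x hx)
  have monoF' := monoAux a b F' F'' hF'' h0
  have contF : ContinuousOn F (Set.Icc a b) := fun x hx => (hF' x hx).continuousWithinAt
  have contF' : ContinuousOn F' (Set.Icc a b) := fun x hx => (hF'' x hx).continuousWithinAt
  have haI : a ∈ Set.Icc a b := Set.left_mem_Icc.2 hab
  have hbI : b ∈ Set.Icc a b := Set.right_mem_Icc.2 hab
  by_cases ha : -Real.sqrt m ≤ F' a
  · refine (vdc_half a b m hab F F' F'' hF' hF'' hm hbd ha).trans ?_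
    gcongr <;> norm_num
  · push_neg at ha
    by_cases hb : -Real.sqrt m ≤ F' b
    · obtain ⟨c, hc, hFc⟩ := intermediate_value_Icc hab contF' ⟨ha.le, hb⟩
      have hac : a ≤ c := hc.1
      have hcb : c ≤ b := hc.2
      have hsub1 : Set.Icc a c ⊆ Set.Icc a b := Set.Icc_subset_Icc le_rfl hcb
      have hsub2 : Set.Icc c b ⊆ Set.Icc a b := Set.Icc_subset_Icc hac le_rfl
      have contE : ContinuousOn (fun x => Complex.exp (Complex.I * (F x : ℂ))) (Set.Icc a b) :=
        (continuousOn_const.mul (Complex.continuous_ofReal.comp_continuousOn contF)).cexp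
      have hint1 : IntervalIntegrable (fun x => Complex.exp (Complex.I * (F x : ℂ))) volume a c :=
        ContinuousOn.intervalIntegrable (by rw [Set.uIcc_of_le hac]; exact contE.mono hsub1)
      have hint2 : IntervalIntegrable (fun x => Complex.exp (Complex.I * (F x : ℂ))) volume c b :=
        ContinuousOn.intervalIntegrable (by rw [Set.uIcc_of_le hcb]; exact contE.mono hsub2)
      rw [← intervalIntegral.integral_add_adjacent_intervals hint1 hint2]
      have hp1 : ‖∫ x in a..c, Complex.exp (Complex.I * (F x : ℂ))‖
          ≤ 3 / Real.sqrt m := by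
        apply vdc_first a c (Real.sqrt m) hac F F' F''
          (fun x hx => (hF' x (hsub1 hx)).mono hsub1)
          (fun x hx => (hF'' x (hsub1 hx)).mono hsub1) hL
          (fun x hx => ?_) (fun x hx => h0 x (hsub1 hx))
        have hge : F' x ≤ -Real.sqrt m := by
          rw [← hFc]
          exact monoF' (hsub1 hx) hc hx.2
        rw [abs_of_neg (lt_of_le_of_lt hge (by linarith))]
        linarith
      have hp2 : ‖∫ x in c..b, Complex.exp (Complex.I * (F x : ℂ))‖
          ≤ 5 / Real.sqrt m := by
        apply vdc_half c b m hcb F F' F''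
          (fun x hx => (hF' x (hsub2 hx)).mono hsub2)
          (fun x hx => (hF'' x (hsub2 hx)).mono hsub2) hm
          (fun x hx => hbd x (hsub2 hx)) (le_of_eq hFc.symm)
      refine (norm_add_le _ _).trans ?_
      calc ‖∫ x in a..c, Complex.exp (Complex.I * (F x : ℂ))‖
            + ‖∫ x in c..b, Complex.exp (Complex.I * (F x : ℂ))‖
          ≤ 3 / Real.sqrt m + 5 / Real.sqrt m := add_le_add hp1 hp2
        _ = 8 / Real.sqrt m := by ring
    · push_neg at hb
      have h3 := vdc_first a b (Real.sqrt m) hab F F' F'' hF' hF'' hL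
        (fun x hx => by
          have hge : F' x ≤ -Real.sqrt m := (monoF' hx hbI hx.2).trans hb.le
          rw [abs_of_neg (lt_of_le_of_lt hge (by linarith))]
          linarith) h0
      refine h3.trans ?_
      gcongr <;> norm_num

/-- (Second derivative test) If `F : [a,b] → ℝ` is twice differentiable with
`|F″(x)| ≥ m > 0` on `[a,b]`, then `|∫_a^b e^{iF(x)} dx| ≤ 8/√m`. -/
theorem stmt_9 (a b m : ℝ) (hab : a < b) (F F' F'' : ℝ → ℝ)
    (hF' : ∀ x ∈ Set.Icc a b, HasDerivWithinAt F (F' x) (Set.Icc a b) x)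
    (hF'' : ∀ x ∈ Set.Icc a b, HasDerivWithinAt F' (F'' x) (Set.Icc a b) x)
    (hm : 0 < m) (hbound : ∀ x ∈ Set.Icc a b, m ≤ |F'' x|) :
    ‖∫ x in a..b, Complex.exp (Complex.I * (F x : ℂ))‖ ≤ 8 / Real.sqrt m := by
  have hsign : (∀ x ∈ Set.Icc a b, m ≤ F'' x) ∨ (∀ x ∈ Set.Icc a b, m ≤ -F'' x) := by
    by_cases hc1 : ∀ x ∈ Set.Icc a b, m ≤ F'' x
    · exact Or.inl hc1
    · push_neg at hc1
      obtain ⟨x₀, hx₀, hx₀'⟩ := hc1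
      have hx0neg : F'' x₀ ≤ -m := by
        rcases abs_cases (F'' x₀) with ⟨h1, _⟩ | ⟨h1, _⟩
        · exfalso; exact absurd (h1 ▸ hbound x₀ hx₀) (not_le.2 hx₀')
        · linarith [hbound x₀ hx₀, h1 ▸ hbound x₀ hx₀]
      right
      intro x hx
      by_contra hcon
      push_neg at hcon
      have hxpos : m ≤ F'' x := by
        rcases abs_cases (F'' x) with ⟨h1, _⟩ | ⟨h1, _⟩
        · exact h1 ▸ hbound x hx
        · linarith [h1 ▸ hbound x hx]
      -- Darboux between x₀ and x gives a zero of F''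
      rcases lt_trichotomy x₀ x with hlt | heq | hgt
      · have hsub : Set.Icc x₀ x ⊆ Set.Icc a b := Set.Icc_subset_Icc hx₀.1 hx.2
        have hD := exists_hasDerivWithinAt_eq_of_gt_of_lt hlt.le
          (f := F') (f' := F'') (fun y hy => (hF'' y (hsub hy)).mono hsub)
          (m := 0) (by linarith) (by linarith)
        obtain ⟨c, hc, hc0⟩ := hD
        have : m ≤ |F'' c| := hbound c (hsub (Set.Ioo_subset_Icc_self hc))
        rw [hc0] at this
        simp at this
        linarith
      · subst heq; linarith
      · have hsub : Set.Icc x x₀ ⊆ Set.Icc a b := Set.Icc_subset_Icc hx.1 hx₀.2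
        have hD := exists_hasDerivWithinAt_eq_of_lt_of_gt hgt.le
          (f := F') (f' := F'') (fun y hy => (hF'' y (hsub hy)).mono hsub)
          (m := 0) (by linarith) (by linarith)
        obtain ⟨c, hc, hc0⟩ := hD
        have : m ≤ |F'' c| := hbound c (hsub (Set.Ioo_subset_Icc_self hc))
        rw [hc0] at this
        simp at this
        linarith
  rcases hsign with hpos | hneg
  · exact vdc_pos a b m hab.le F F' F'' hF' hF'' hm hpos
  · have key := vdc_pos a b m hab.le (fun x => -F x) (fun x => -F' x) (fun x => -F'' x)
      (fun x hx => (hF' x hx).neg) (fun x hx => (hF'' x hx).neg) hm hneg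
    have hconj : ∫ x in a..b, Complex.exp (Complex.I * (((fun x => -F x) x : ℝ) : ℂ))
        = (starRingEnd ℂ) (∫ x in a..b, Complex.exp (Complex.I * (F x : ℂ))) := by
      rw [← my_integral_conj]
      apply intervalIntegral.integral_congr
      intro x _
      show Complex.exp (Complex.I * ((-F x : ℝ) : ℂ)) = (starRingEnd ℂ) (Complex.exp (Complex.I * (F x : ℂ)))
      rw [← Complex.exp_conj]
      congr 1
      simp only [map_mul, Complex.conj_I, Complex.conj_ofReal]
      push_cast
      ring
    rw [hconj, Complex.norm_conj] at key
    exact key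
end

section
/- Let k ≥ 1, let d₁, …, d_k and N be positive integers with N ≥ 2, and let c₁, …, c_k be positive integers. Then ∑_{d₁ ≤ N^{α₁}+c₁} ⋯ ∑_{d_k ≤ N^{α_k}+c_k} (log d₁)(log d₂)⋯(log d_k) / (min(d₁, …, d_k))^{1/4} ≪ N^{(∑_{i=1}^k α_i) − δ/4} (log N)^k, for any real numbers 0 < δ = α₁ < α₂ < ⋯ < α_k < 1, where the sums run over positive integers d_i and the implied constant depends only on k and the c_i. -/
open Filter Finset


lemma aux_step (a : ℝ) (ha : 0 ≤ a) :
    4/3 * a ^ ((3:ℝ)/4) + (a+1) ^ (-(1:ℝ)/4) ≤ 4/3 * (a+1) ^ ((3:ℝ)/4) := by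
  set x := a ^ ((1:ℝ)/4) with hxdef
  set y := (a+1) ^ ((1:ℝ)/4) with hydef
  have hx : 0 ≤ x := Real.rpow_nonneg ha _
  have hy : 0 < y := Real.rpow_pos_of_pos (by linarith) _
  have hx4 : x ^ (4:ℕ) = a := by
    rw [hxdef, ← Real.rpow_natCast (a ^ ((1:ℝ)/4)) 4, ← Real.rpow_mul ha]
    norm_num
  have hy4 : y ^ (4:ℕ) = a + 1 := by
    rw [hydef, ← Real.rpow_natCast ((a+1) ^ ((1:ℝ)/4)) 4, ← Real.rpow_mul (by linarith)]
    norm_num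
  have hx3 : a ^ ((3:ℝ)/4) = x ^ (3:ℕ) := by
    rw [hxdef, ← Real.rpow_natCast (a ^ ((1:ℝ)/4)) 3, ← Real.rpow_mul ha]
    norm_num
  have hy3 : (a+1) ^ ((3:ℝ)/4) = y ^ (3:ℕ) := by
    rw [hydef, ← Real.rpow_natCast ((a+1) ^ ((1:ℝ)/4)) 3, ← Real.rpow_mul (by linarith)]
    norm_num
  have hyinv : (a+1) ^ (-(1:ℝ)/4) = 1 / y := by
    rw [hydef, one_div, ← Real.rpow_neg_one ((a+1) ^ ((1:ℝ)/4)), ← Real.rpow_mul (by linarith)]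
    norm_num
  rw [hx3, hy3, hyinv]
  have key : 1 / y ≤ 4/3 * y ^ (3:ℕ) - 4/3 * x ^ (3:ℕ) := by
    rw [div_le_iff₀ hy]
    nlinarith [mul_nonneg (sq_nonneg (y - x)) (sq_nonneg (y + x)),
      mul_nonneg (sq_nonneg (y - x)) (sq_nonneg x), hx4, hy4]
  linarith

lemma sum_inv_rpow (M : ℕ) :
    ∑ x ∈ Finset.Icc 1 M, (x:ℝ) ^ (-(1:ℝ)/4) ≤ 4/3 * (M:ℝ) ^ ((3:ℝ)/4) := by
  induction M with
  | zero => simp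
  | succ n ih =>
    rw [Finset.sum_Icc_succ_top (by omega)]
    push_cast
    calc ∑ x ∈ Finset.Icc 1 n, (x:ℝ) ^ (-(1:ℝ)/4) + ((n:ℝ)+1) ^ (-(1:ℝ)/4)
        ≤ 4/3 * (n:ℝ) ^ ((3:ℝ)/4) + ((n:ℝ)+1) ^ (-(1:ℝ)/4) := by linarith
      _ ≤ 4/3 * ((n:ℝ)+1) ^ ((3:ℝ)/4) := aux_step n (Nat.cast_nonneg n)


/-- For positive integers `c₁, …, c_k` and reals `0 < δ = α₁ < ⋯ < α_k < 1`:
`∑_{d₁ ≤ N^{α₁}+c₁} ⋯ ∑_{d_k ≤ N^{α_k}+c_k} (log d₁)⋯(log d_k)/(min dᵢ)^{1/4}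
  ≪ N^{∑αᵢ − δ/4} (log N)^k`
for all sufficiently large `N`, where the sums run over positive integers `dᵢ`
and the implied constant depends only on `k` and the `cᵢ`. -/
theorem stmt_17 (k : ℕ) (hk : 0 < k) (c : Fin k → ℕ) (hc : ∀ i, 0 < c i) :
    ∃ C : ℝ, ∀ α : Fin k → ℝ, StrictMono α → 0 < α ⟨0, hk⟩ → α ⟨k - 1, by omega⟩ < 1 →
      ∀ᶠ N : ℕ in atTop,
        ∑ d ∈ Finset.Icc (fun _ : Fin k => 1) fun i => ⌊(N : ℝ) ^ (α i) + c i⌋₊,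
            (∏ i, Real.log (d i)) /
              ((Finset.univ.inf' ⟨⟨0, hk⟩, Finset.mem_univ _⟩ d : ℕ) : ℝ) ^ ((1 : ℝ) / 4)
          ≤ C * (N : ℝ) ^ ((∑ i, α i) - α ⟨0, hk⟩ / 4) * Real.log N ^ k := by
  classical
  set B : ℝ := ∑ i, Real.log (1 + (c i : ℝ)) with hB
  set A : ℝ := ∏ i, (1 + (c i : ℝ)) with hA
  have hB0 : 0 ≤ B := Finset.sum_nonneg fun i _ => Real.log_nonneg (le_add_of_nonneg_right (Nat.cast_nonneg _))
  have hA0 : 0 ≤ A := Finset.prod_nonneg fun i _ => by positivity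
  refine ⟨k * (4/3 * (1 + B) ^ k * A), ?_⟩
  intro α hα hpos h1
  filter_upwards [Filter.eventually_ge_atTop 3] with N hN
  have hN1 : (1:ℝ) ≤ N := by exact_mod_cast le_trans (by norm_num) hN
  have hN0 : (0:ℝ) < N := lt_of_lt_of_le one_pos hN1
  have hlogN : 1 ≤ Real.log N := by
    rw [Real.le_log_iff_exp_le hN0]
    calc Real.exp 1 ≤ 2.7182818286 := Real.exp_one_lt_d9.le
      _ ≤ N := by exact_mod_cast le_trans (by norm_num) (Nat.cast_le.mpr hN)
  have hαpos : ∀ i, 0 < α i := fun i =>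
    lt_of_lt_of_le hpos (hα.monotone (Fin.le_def.mpr (Nat.zero_le _)))
  have hα1 : ∀ i, α i ≤ 1 := fun i =>
    le_trans (hα.monotone (Fin.le_def.mpr (by omega : i.val ≤ k - 1))) h1.le
  set M : Fin k → ℕ := fun i => ⌊(N : ℝ) ^ (α i) + c i⌋₊ with hM
  have hrpow1 : ∀ i, (1:ℝ) ≤ (N:ℝ) ^ (α i) := fun i => Real.one_le_rpow hN1 (hαpos i).le
  have hM1 : ∀ i, 1 ≤ M i := fun i => Nat.le_floor (by
    have := hrpow1 i
    have : (0:ℝ) ≤ (c i : ℝ) := Nat.cast_nonneg _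
    push_cast
    linarith [hrpow1 i])
  have hMle : ∀ i, (M i : ℝ) ≤ (1 + c i) * (N:ℝ) ^ (α i) := by
    intro i
    calc (M i : ℝ) ≤ (N:ℝ) ^ (α i) + c i := Nat.floor_le (by positivity)
      _ ≤ (1 + c i) * (N:ℝ) ^ (α i) := by nlinarith [hrpow1 i, (Nat.cast_nonneg (c i) : (0:ℝ) ≤ c i)]
  have hlogM : ∀ i, Real.log (M i) ≤ (1 + B) * Real.log N := by
    intro i
    have h1c : (1:ℝ) ≤ 1 + c i := le_add_of_nonneg_right (Nat.cast_nonneg _)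
    calc Real.log (M i) ≤ Real.log ((1 + c i) * (N:ℝ) ^ (α i)) :=
          Real.log_le_log (by exact_mod_cast hM1 i) (hMle i)
      _ = Real.log (1 + (c i:ℝ)) + α i * Real.log N := by
          rw [Real.log_mul (by positivity) (by positivity), Real.log_rpow hN0]
      _ ≤ B + 1 * Real.log N := by
          have hb1 : Real.log (1 + (c i:ℝ)) ≤ B :=
            Finset.single_le_sum (f := fun j => Real.log (1 + (c j:ℝ)))
              (fun j _ => Real.log_nonneg (le_add_of_nonneg_right (Nat.cast_nonneg _)))
              (Finset.mem_univ i)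
          have hb2 : α i * Real.log N ≤ 1 * Real.log N :=
            mul_le_mul_of_nonneg_right (hα1 i) (by linarith)
          linarith
      _ ≤ (1 + B) * Real.log N := by nlinarith
  -- log of any x in range
  have hlogx : ∀ i, ∀ x ∈ Finset.Icc 1 (M i), Real.log x ≤ (1 + B) * Real.log N := by
    intro i x hx
    rw [Finset.mem_Icc] at hx
    calc Real.log x ≤ Real.log (M i) :=
        Real.log_le_log (by exact_mod_cast hx.1) (by exact_mod_cast hx.2)
      _ ≤ _ := hlogM i
  set D := Finset.Icc (fun _ : Fin k => 1) M with hD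
  have hDmem : ∀ d ∈ D, ∀ j, 1 ≤ d j ∧ d j ≤ M j := by
    intro d hd j
    rw [hD, Finset.mem_Icc] at hd
    exact ⟨hd.1 j, hd.2 j⟩
  -- Step A
  have stepA : ∑ d ∈ D, (∏ i, Real.log (d i)) /
        ((Finset.univ.inf' ⟨⟨0, hk⟩, Finset.mem_univ _⟩ d : ℕ) : ℝ) ^ ((1 : ℝ) / 4)
      ≤ ∑ i, ∑ d ∈ D, (∏ j, Real.log (d j)) * (d i : ℝ) ^ (-(1:ℝ)/4) := by
    rw [Finset.sum_comm]
    refine Finset.sum_le_sum fun d hd => ?_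
    obtain ⟨i1, -, hinf⟩ := Finset.exists_mem_eq_inf' ⟨⟨0, hk⟩, Finset.mem_univ _⟩ d
    have hd1 : ∀ j, 1 ≤ d j := fun j => (hDmem d hd j).1
    have hprodnn : 0 ≤ ∏ j, Real.log (d j) :=
      Finset.prod_nonneg fun j _ => Real.log_nonneg (by exact_mod_cast hd1 j)
    have : (∏ i, Real.log (d i)) / ((d i1 : ℕ) : ℝ) ^ ((1 : ℝ) / 4)
        = (∏ j, Real.log (d j)) * (d i1 : ℝ) ^ (-(1:ℝ)/4) := by
      rw [div_eq_mul_inv, ← Real.rpow_neg (Nat.cast_nonneg _), neg_div]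
    rw [hinf, this]
    exact Finset.single_le_sum
      (fun j _ => mul_nonneg hprodnn (Real.rpow_nonneg (Nat.cast_nonneg _) _))
      (Finset.mem_univ i1)
  refine stepA.trans ?_
  -- Step B : factorization
  have hDpi : D = Fintype.piFinset fun j => Finset.Icc 1 (M j) := Pi.Icc_eq _ _
  have stepB : ∀ i : Fin k, ∑ d ∈ D, (∏ j, Real.log (d j)) * (d i : ℝ) ^ (-(1:ℝ)/4)
      = ∏ j, ∑ x ∈ Finset.Icc 1 (M j),
          Real.log x * (if j = i then (x:ℝ) ^ (-(1:ℝ)/4) else 1) := by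
    intro i
    rw [Finset.prod_univ_sum, hDpi]
    refine Finset.sum_congr rfl fun d _ => ?_
    rw [Finset.prod_mul_distrib]
    congr 1
    simp
  -- Step C : bound each factor
  set L : ℝ := (1 + B) * Real.log N with hL
  have hL0 : 0 ≤ L := by positivity
  have hTnn : ∀ i j : Fin k, 0 ≤ ∑ x ∈ Finset.Icc 1 (M j),
      Real.log x * (if j = i then (x:ℝ) ^ (-(1:ℝ)/4) else 1) := by
    intro i j
    refine Finset.sum_nonneg fun x hx => ?_
    rw [Finset.mem_Icc] at hx
    refine mul_nonneg (Real.log_nonneg (by exact_mod_cast hx.1)) ?_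
    split
    · exact Real.rpow_nonneg (Nat.cast_nonneg _) _
    · norm_num
  have stepC : ∀ i j : Fin k,
      (∑ x ∈ Finset.Icc 1 (M j), Real.log x * (if j = i then (x:ℝ) ^ (-(1:ℝ)/4) else 1))
      ≤ (if j = i then (4:ℝ)/3 else 1) * ((1 + c j) *
          (N:ℝ) ^ (if j = i then α j * (3/4) else α j)) * L := by
    intro i j
    by_cases hji : j = i
    · subst hji
      simp only [if_pos rfl]
      have h1c : (1:ℝ) ≤ 1 + c j := le_add_of_nonneg_right (Nat.cast_nonneg _)
      calc ∑ x ∈ Finset.Icc 1 (M j), Real.log x * (x:ℝ) ^ (-(1:ℝ)/4)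
          ≤ ∑ x ∈ Finset.Icc 1 (M j), L * (x:ℝ) ^ (-(1:ℝ)/4) := by
            refine Finset.sum_le_sum fun x hx => ?_
            exact mul_le_mul_of_nonneg_right (hlogx j x hx)
              (Real.rpow_nonneg (Nat.cast_nonneg _) _)
        _ = L * ∑ x ∈ Finset.Icc 1 (M j), (x:ℝ) ^ (-(1:ℝ)/4) := by rw [Finset.mul_sum]
        _ ≤ L * (4/3 * (M j:ℝ) ^ ((3:ℝ)/4)) :=
            mul_le_mul_of_nonneg_left (sum_inv_rpow (M j)) hL0
        _ ≤ L * (4/3 * ((1 + c j) * (N:ℝ) ^ (α j * (3/4)))) := by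
            have h1 : ((M j:ℝ)) ^ ((3:ℝ)/4) ≤ ((1 + c j) * (N:ℝ) ^ (α j)) ^ ((3:ℝ)/4) :=
              Real.rpow_le_rpow (Nat.cast_nonneg _) (hMle j) (by norm_num)
            have h2 : ((1 + (c j:ℝ)) * (N:ℝ) ^ (α j)) ^ ((3:ℝ)/4)
                = (1 + (c j:ℝ)) ^ ((3:ℝ)/4) * ((N:ℝ) ^ (α j)) ^ ((3:ℝ)/4) :=
              Real.mul_rpow (by positivity) (by positivity)
            have h3 : (1 + (c j:ℝ)) ^ ((3:ℝ)/4) ≤ 1 + (c j:ℝ) := by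
              calc (1 + (c j:ℝ)) ^ ((3:ℝ)/4) ≤ (1 + (c j:ℝ)) ^ ((1:ℝ)) :=
                  Real.rpow_le_rpow_of_exponent_le h1c (by norm_num)
                _ = 1 + (c j:ℝ) := Real.rpow_one _
            have h4 : ((N:ℝ) ^ (α j)) ^ ((3:ℝ)/4) = (N:ℝ) ^ (α j * (3/4)) :=
              (Real.rpow_mul hN0.le _ _).symm
            have h5 : (0:ℝ) ≤ ((N:ℝ) ^ (α j)) ^ ((3:ℝ)/4) := by positivity
            have h6 : ((M j:ℝ)) ^ ((3:ℝ)/4) ≤ (1 + (c j:ℝ)) * (N:ℝ) ^ (α j * (3/4)) := by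
              rw [← h4]
              exact h1.trans (h2.le.trans (mul_le_mul_of_nonneg_right h3 h5))
            nlinarith [hL0]
        _ = 4/3 * ((1 + (c j:ℝ)) * (N:ℝ) ^ (α j * (3/4))) * L := by ring
    · simp only [if_neg hji]
      calc ∑ x ∈ Finset.Icc 1 (M j), Real.log x * 1
          ≤ ∑ _x ∈ Finset.Icc 1 (M j), L := by
            refine Finset.sum_le_sum fun x hx => ?_
            rw [mul_one]; exact hlogx j x hx
        _ = (M j : ℝ) * L := by
            rw [Finset.sum_const, Nat.card_Icc]
            simp [nsmul_eq_mul]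
        _ ≤ ((1 + c j) * (N:ℝ) ^ (α j)) * L := by
            have := hMle j; gcongr
        _ = 1 * ((1 + c j) * (N:ℝ) ^ (α j)) * L := by ring
  have hlogN0 : (0:ℝ) ≤ Real.log N := by linarith
  have perI : ∀ i : Fin k, ∑ d ∈ D, (∏ j, Real.log (d j)) * (d i : ℝ) ^ (-(1:ℝ)/4)
      ≤ (4/3 * (1 + B) ^ k * A) * (N:ℝ) ^ ((∑ j, α j) - α ⟨0, hk⟩ / 4) * Real.log N ^ k := by
    intro i
    rw [stepB i]
    have hsumβ : ∑ j, (if j = i then α j * (3/4) else α j) = (∑ j, α j) - α i / 4 := by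
      have hcong : ∀ j, (if j = i then α j * (3/4) else α j)
          = α j + (if j = i then -(α j) / 4 else 0) := by
        intro j; split <;> ring
      rw [Finset.sum_congr rfl fun j _ => hcong j, Finset.sum_add_distrib,
        Finset.sum_ite_eq' Finset.univ i (fun j => -(α j) / 4)]
      simp only [Finset.mem_univ, if_true]
      ring
    calc ∏ j, ∑ x ∈ Finset.Icc 1 (M j),
            Real.log x * (if j = i then (x:ℝ) ^ (-(1:ℝ)/4) else 1)
        ≤ ∏ j, (if j = i then (4:ℝ)/3 else 1) * ((1 + c j) *
            (N:ℝ) ^ (if j = i then α j * (3/4) else α j)) * L :=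
          Finset.prod_le_prod (fun j _ => hTnn i j) (fun j _ => stepC i j)
      _ = (4/3) * (A * (N:ℝ) ^ ((∑ j, α j) - α i / 4)) * L ^ k := by
          rw [Finset.prod_mul_distrib, Finset.prod_mul_distrib, Finset.prod_const,
            Finset.prod_mul_distrib, Finset.prod_ite_eq' Finset.univ i (fun _ => (4:ℝ)/3),
            ← Real.rpow_sum_of_pos hN0, hsumβ]
          simp only [Finset.mem_univ, if_true, Finset.card_univ, Fintype.card_fin, ← hA]
      _ ≤ (4/3) * (A * (N:ℝ) ^ ((∑ j, α j) - α ⟨0, hk⟩ / 4)) * L ^ k := by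
          have hαle : α ⟨0, hk⟩ ≤ α i := hα.monotone (Fin.le_def.mpr (Nat.zero_le _))
          have := Real.rpow_le_rpow_of_exponent_le hN1
            (by linarith : (∑ j, α j) - α i / 4 ≤ (∑ j, α j) - α ⟨0, hk⟩ / 4)
          have hLk : (0:ℝ) ≤ L ^ k := pow_nonneg hL0 k
          exact mul_le_mul_of_nonneg_right (mul_le_mul_of_nonneg_left
            (mul_le_mul_of_nonneg_left this hA0) (by norm_num)) hLk
      _ = (4/3 * (1 + B) ^ k * A) * (N:ℝ) ^ ((∑ j, α j) - α ⟨0, hk⟩ / 4)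
            * Real.log N ^ k := by
          rw [hL, mul_pow]; ring
  calc ∑ i : Fin k, ∑ d ∈ D, (∏ j, Real.log (d j)) * (d i : ℝ) ^ (-(1:ℝ)/4)
      ≤ ∑ _i : Fin k, (4/3 * (1 + B) ^ k * A) * (N:ℝ) ^ ((∑ j, α j) - α ⟨0, hk⟩ / 4)
          * Real.log N ^ k := Finset.sum_le_sum fun i _ => perI i
    _ = (k : ℝ) * (4/3 * (1 + B) ^ k * A) * (N:ℝ) ^ ((∑ j, α j) - α ⟨0, hk⟩ / 4)
          * Real.log N ^ k := by
        rw [Finset.sum_const, Finset.card_univ, Fintype.card_fin, nsmul_eq_mul]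
        ring
    _ = _ := by ring
end
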